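/- Let T be a numerical set with T ≠ ℕ. There exists a numerical semigroup S with T = S̃ if and only if: (a) F(T) is not a sum of two elements of T, and (b) for every x, y ∈ T with x, y ≤ F(T) and x + y > F(T), we have x + y − F(T) − 1 ∈ T. -/
import Mathlib


open Set

def IsNumericalSet (S : Set ℕ) : Prop := 0 ∈ S ∧ Sᶜ.Finite

def IsNumericalSemigroup (S : Set ℕ) : Prop :=
  IsNumericalSet S ∧ ∀ a ∈ S, ∀ b ∈ S, a + b ∈ S

/-- The associated set `A(S) = {s ∈ S : s + S ⊆ S}`. -/
def A (S : Set ℕ) : Set ℕ := {s ∈ S | ∀ t ∈ S, s + t ∈ S}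

/-- The Frobenius number: the largest gap of `S`. -/
noncomputable def F (S : Set ℕ) : ℕ := sSup Sᶜ

/-- The base: the largest element of `S` below `F S`. -/
noncomputable def B (S : Set ℕ) : ℕ := sSup {s | s ∈ S ∧ s < F S}

/-- The multiplicity: the smallest positive element of `S`. -/
noncomputable def m (S : Set ℕ) : ℕ := sInf {s | s ∈ S ∧ 0 < s}

/-- The complement numerical set (for `S ≠ ℕ`). -/
noncomputable def Stilde (S : Set ℕ) : Set ℕ :=
  {x | ∃ s ∈ S, s ≤ B S ∧ x = B S - s} ∪ {n | B S ≤ n}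

-- The complement operation, with the convention that the complement of ℕ is ℕ.
open Classical in
noncomputable def complOp (S : Set ℕ) : Set ℕ :=
  if S = Set.univ then Set.univ else Stilde S

/-- The genus: the number of gaps. -/
noncomputable def genus (S : Set ℕ) : ℕ := Sᶜ.ncard

/-- The number of boxes with hook length 1. -/
noncomputable def c1 (S : Set ℕ) : ℕ := {n | n ∈ S ∧ n + 1 ∉ S}.ncard

/-- An atom: a positive element not a sum of two positive elements. -/
def IsAtomOf (S : Set ℕ) (a : ℕ) : Prop :=
  a ∈ S ∧ 0 < a ∧ ¬ ∃ x ∈ S, ∃ y ∈ S, 0 < x ∧ 0 < y ∧ a = x + y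

/-- A small atom: an atom smaller than the Frobenius number. -/
def IsSmallAtom (S : Set ℕ) (a : ℕ) : Prop := IsAtomOf S a ∧ a < F S

/-- The embedding dimension: the number of atoms. -/
noncomputable def numAtoms (S : Set ℕ) : ℕ := {a | IsAtomOf S a}.ncard

/-- Maximal embedding dimension. -/
def MaxED (S : Set ℕ) : Prop := numAtoms S = m S

lemma aux_gt_F_mem {T : Set ℕ} (h : Tᶜ.Finite) {n : ℕ} (hn : F T < n) : n ∈ T := by
  by_contra hc
  exact absurd (le_csSup h.bddAbove hc) (not_le.2 hn)

lemma aux_F_notMem {T : Set ℕ} (h : Tᶜ.Finite) (hne : T ≠ Set.univ) : F T ∉ T :=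
  Nat.sSup_mem (Set.nonempty_compl.mpr hne) h.bddAbove

lemma aux_one_notMem {S : Set ℕ} (hS : IsNumericalSemigroup S) (hne : S ≠ Set.univ) :
    1 ∉ S := by
  intro h1
  apply hne
  ext n
  simp only [Set.mem_univ, iff_true]
  induction n with
  | zero => exact hS.1.1
  | succ k ih => exact hS.2 k ih 1 h1

theorem complement_of_semigroup_characterization (T : Set ℕ) (hT : IsNumericalSet T)
    (hne : T ≠ Set.univ) :
    (∃ S : Set ℕ, IsNumericalSemigroup S ∧ S ≠ Set.univ ∧ Stilde S = T) ↔
      ((∀ x ∈ T, ∀ y ∈ T, x + y ≠ F T) ∧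
        (∀ x ∈ T, ∀ y ∈ T, x ≤ F T → y ≤ F T → F T < x + y → x + y - (F T + 1) ∈ T)) := by
  constructor
  · rintro ⟨S, hSsg, hSne, hST⟩
    have hSc : Sᶜ.Finite := hSsg.1.2
    have h0S : (0 : ℕ) ∈ S := hSsg.1.1
    have h1S : (1 : ℕ) ∉ S := aux_one_notMem hSsg hSne
    have hFS : F S ∉ S := aux_F_notMem hSc hSne
    have hF1 : 1 ≤ F S := by
      rcases Nat.eq_zero_or_pos (F S) with h | h
      · exact absurd (h ▸ h0S) hFS
      · exact h
    have hBbdd : BddAbove {s | s ∈ S ∧ s < F S} := ⟨F S, fun x hx => le_of_lt hx.2⟩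
    have hBmem : B S ∈ {s | s ∈ S ∧ s < F S} :=
      Nat.sSup_mem ⟨0, h0S, by omega⟩ hBbdd
    have hBle : ∀ s ∈ S, s < F S → s ≤ B S := fun s hs h => le_csSup hBbdd ⟨hs, h⟩
    have Tmem : ∀ x, x ∈ T ↔ (∃ s ∈ S, s ≤ B S ∧ x = B S - s) ∨ B S ≤ x := by
      intro x
      rw [← hST]
      exact Set.mem_union x _ _
    have hB1 : 1 ≤ B S := by
      by_contra h
      exact hne (Set.eq_univ_iff_forall.mpr fun n => (Tmem n).mpr (Or.inr (by omega)))
    have hBm1 : B S - 1 ∉ T := by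
      intro h
      rcases (Tmem _).1 h with ⟨s, hs, hsB, heq⟩ | h'
      · have : s = 1 := by omega
        exact h1S (this ▸ hs)
      · omega
    have hFT : F T = B S - 1 := by
      have h1 : F T ∉ T := aux_F_notMem hT.2 hne
      have h2 : F T ≤ B S - 1 := by
        by_contra h
        exact h1 ((Tmem _).mpr (Or.inr (by omega)))
      have h3 : B S - 1 ≤ F T := le_csSup hT.2.bddAbove hBm1
      omega
    constructor
    · intro x hx y hy heq
      rcases (Tmem x).1 hx with ⟨s, hs, hsB, hxe⟩ | h'
      · rcases (Tmem y).1 hy with ⟨t, ht, htB, hye⟩ | h''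
        · have hstS : s + t ∈ S := hSsg.2 s hs t ht
          have hst : s + t = B S + 1 := by omega
          have hBF : B S < F S := hBmem.2
          rcases Nat.lt_or_ge (s + t) (F S) with hlt | hge
          · have := hBle _ hstS hlt
            omega
          · have : s + t = F S := by omega
            exact hFS (this ▸ hstS)
        · omega
      · omega
    · intro x hx y hy hxF hyF hsum
      rcases (Tmem x).1 hx with ⟨s, hs, hsB, hxe⟩ | h'
      · rcases (Tmem y).1 hy with ⟨t, ht, htB, hye⟩ | h''
        · exact (Tmem _).mpr (Or.inl ⟨s + t, hSsg.2 s hs t ht, by omega, by omega⟩)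
        · omega
      · omega
  · rintro ⟨ha, hb⟩
    have hTc : Tᶜ.Finite := hT.2
    have h0T : (0 : ℕ) ∈ T := hT.1
    have hFnT : F T ∉ T := aux_F_notMem hTc hne
    have hgt : ∀ n, F T < n → n ∈ T := fun n hn => aux_gt_F_mem hTc hn
    have hf1 : 1 ≤ F T := by
      rcases Nat.eq_zero_or_pos (F T) with h | h
      · exact absurd (h ▸ h0T) hFnT
      · exact h
    have hbT : F T + 1 ∈ T := hgt _ (by omega)
    set R : Set ℕ := {x | ∃ t ∈ T, t ≤ F T + 1 ∧ x = F T + 1 - t} with hRdef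
    have hRb : ∀ x ∈ R, x ≤ F T + 1 := by
      rintro x ⟨t, ht, htb, rfl⟩; omega
    have h0R : (0 : ℕ) ∈ R := ⟨F T + 1, hbT, le_refl _, by omega⟩
    have hbR : F T + 1 ∈ R := ⟨0, h0T, by omega, by omega⟩
    have h1R : (1 : ℕ) ∉ R := by
      rintro ⟨t, htT, htb, heq⟩
      have : t = F T := by omega
      exact hFnT (this ▸ htT)
    have hclo : ∀ x ∈ R, ∀ y ∈ R, x + y ≤ F T + 1 → x + y ∈ R := by
      rintro x ⟨t1, ht1, ht1b, rfl⟩ y ⟨t2, ht2, ht2b, rfl⟩ hxy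
      refine ⟨t1 + t2 - (F T + 1), ?_, by omega, by omega⟩
      rcases eq_or_lt_of_le ht1b with h1 | h1
      · have h : t1 + t2 - (F T + 1) = t2 := by omega
        rw [h]; exact ht2
      rcases eq_or_lt_of_le ht2b with h2 | h2
      · have h : t1 + t2 - (F T + 1) = t1 := by omega
        rw [h]; exact ht1
      · exact hb t1 ht1 t2 ht2 (by omega) (by omega) (by omega)
    set KS : Set ℕ := {n | ∃ x ∈ R, ∃ y ∈ R, n = x + y ∧ F T + 1 < n} with hKSdef
    have hKSne : KS.Nonempty :=
      ⟨(F T + 1) + (F T + 1), ⟨F T + 1, hbR, F T + 1, hbR, rfl, by omega⟩⟩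
    set K : ℕ := sInf KS with hKdef
    have hKmem : K ∈ KS := Nat.sInf_mem hKSne
    obtain ⟨x0, hx0, y0, hy0, hKeq, hKgt⟩ := hKmem
    have hKle : ∀ n ∈ KS, K ≤ n := fun n hn => Nat.sInf_le hn
    have hKne1 : K ≠ F T + 2 := by
      intro h
      obtain ⟨t1, ht1, ht1b, hx0e⟩ := hx0
      obtain ⟨t2, ht2, ht2b, hy0e⟩ := hy0
      exact ha t1 ht1 t2 ht2 (by omega)
    have hKb : F T + 2 < K := by omega
    refine ⟨R ∪ {n | K ≤ n}, ⟨⟨Or.inl h0R, ?_⟩, ?_⟩, ?_, ?_⟩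
    · exact (Set.finite_Iio K).subset fun n hn => by
        simp only [Set.mem_compl_iff, Set.mem_union, Set.mem_setOf_eq, not_or, not_le] at hn
        exact hn.2
    · rintro a (haR | haK) c (hcR | hcK)
      · rcases le_or_gt (a + c) (F T + 1) with h | h
        · exact Or.inl (hclo a haR c hcR h)
        · exact Or.inr (hKle _ ⟨a, haR, c, hcR, rfl, h⟩)
      · exact Or.inr (by simp only [Set.mem_setOf_eq] at hcK ⊢; omega)
      · exact Or.inr (by simp only [Set.mem_setOf_eq] at haK ⊢; omega)
      · exact Or.inr (by simp only [Set.mem_setOf_eq] at haK hcK ⊢; omega)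
    · intro h
      have h1 : (1 : ℕ) ∈ R ∪ {n | K ≤ n} := h ▸ Set.mem_univ 1
      rcases h1 with h1 | h1
      · exact h1R h1
      · simp only [Set.mem_setOf_eq] at h1; omega
    · have hKm1 : K - 1 ∉ R ∪ {n | K ≤ n} := by
        rintro (h | h)
        · have := hRb _ h; omega
        · simp only [Set.mem_setOf_eq] at h; omega
      have hcompl_fin : (R ∪ {n | K ≤ n})ᶜ.Finite :=
        (Set.finite_Iio K).subset fun n hn => by
          simp only [Set.mem_compl_iff, Set.mem_union, Set.mem_setOf_eq, not_or, not_le] at hn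
          exact hn.2
      have hFS : F (R ∪ {n | K ≤ n}) = K - 1 := by
        have h1 : F (R ∪ {n | K ≤ n}) ∈ (R ∪ {n | K ≤ n})ᶜ :=
          Nat.sSup_mem ⟨K - 1, hKm1⟩ hcompl_fin.bddAbove
        have h2 : F (R ∪ {n | K ≤ n}) ≤ K - 1 := by
          simp only [Set.mem_compl_iff, Set.mem_union, Set.mem_setOf_eq, not_or, not_le] at h1
          omega
        have h3 : K - 1 ≤ F (R ∪ {n | K ≤ n}) := le_csSup hcompl_fin.bddAbove hKm1
        omega
      have hBS : B (R ∪ {n | K ≤ n}) = F T + 1 := by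
        unfold B
        rw [hFS]
        have hbdd : BddAbove {s | s ∈ R ∪ {n | K ≤ n} ∧ s < K - 1} :=
          ⟨K, fun x hx => by have := hx.2; omega⟩
        have hmem : sSup {s | s ∈ R ∪ {n | K ≤ n} ∧ s < K - 1} ∈
            {s | s ∈ R ∪ {n | K ≤ n} ∧ s < K - 1} :=
          Nat.sSup_mem ⟨F T + 1, Or.inl hbR, by omega⟩ hbdd
        have h2 : sSup {s | s ∈ R ∪ {n | K ≤ n} ∧ s < K - 1} ≤ F T + 1 := by
          obtain ⟨hm, hlt⟩ := hmem
          rcases hm with h | h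
          · exact hRb _ h
          · simp only [Set.mem_setOf_eq] at h; omega
        have h3 : F T + 1 ≤ sSup {s | s ∈ R ∪ {n | K ≤ n} ∧ s < K - 1} :=
          le_csSup hbdd ⟨Or.inl hbR, by omega⟩
        omega
      unfold Stilde
      rw [hBS]
      ext x
      simp only [Set.mem_union, Set.mem_setOf_eq]
      constructor
      · rintro (⟨s, hsS, hsb, rfl⟩ | hx)
        · rcases hsS with hsR | hsK
          · obtain ⟨t, htT, htb, rfl⟩ := hsR
            have h : F T + 1 - (F T + 1 - t) = t := by omega
            rw [h]; exact htT
          · have : K ≤ s := hsK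
            omega
        · exact hgt _ (by omega)
      · intro hxT
        rcases le_or_gt (F T + 1) x with h | h
        · exact Or.inr h
        · exact Or.inl ⟨F T + 1 - x, Or.inl ⟨x, hxT, by omega, rfl⟩, by omega, by omega⟩
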